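/- Let M be an infinite 3-graph whose automorphism group acts transitively on M, such that R(a) is infinite for every a ∈ M and the relation 'x = y or c(x,y) = R' is an equivalence relation on R(a) with finitely many classes. For c(a,b) = R let ℓ(a,b) = {a} ∪ (the class of b in R(a)). Then: (i) ℓ(a,b) is the unique maximal R-clique of M containing both a and b; (ii) any two distinct vertices of M lie in at most one member of 𝓛 = {ℓ(a,b) : c(a,b) = R}, equivalently any two distinct maximal R-cliques of M meet in at most one point; (iii) if moreover M is homogeneous, then every line ℓ(a,b) is infinite. Hence (M, 𝓛) is a semilinear space. -/

import Mathlib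

/-!
Common definitions for edge-coloured graphs ("n-graphs").
`V` is the vertex set and `C` the set of colours; `c x y` is the colour of the
pair `{x, y}` (only meaningful for `x ≠ y`).
-/

variable {V C : Type*}

/-- The colouring `c` is symmetric. -/
def CSymm (c : V → V → C) : Prop :=
  ∀ x y : V, c x y = c y x

/-- Every colour is realised on some pair of distinct vertices. -/
def CAll (c : V → V → C) : Prop :=
  ∀ i : C, ∃ x y : V, x ≠ y ∧ c x y = i

/-- `σ` is an automorphism of the edge-coloured graph `(V, c)`. -/
def CAuto (c : V → V → C) (σ : Equiv.Perm V) : Prop :=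
  ∀ x y : V, x ≠ y → c (σ x) (σ y) = c x y

/-- Homogeneity: every colour-preserving injection defined on a finite set of
vertices (equivalently, every colour-preserving bijection between two finite
subsets) extends to an automorphism. -/
def CHom (c : V → V → C) : Prop :=
  ∀ (A : Finset V) (f : V → V), Set.InjOn f (↑A : Set V) →
    (∀ x ∈ A, ∀ y ∈ A, x ≠ y → c (f x) (f y) = c x y) →
    ∃ σ : Equiv.Perm V, CAuto c σ ∧ ∀ x ∈ A, σ x = f x

/-- The automorphism group acts transitively on the vertices. -/
def CTrans (c : V → V → C) : Prop :=
  ∀ x y : V, ∃ σ : Equiv.Perm V, CAuto c σ ∧ σ x = y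

/-- Primitivity: the automorphism group acts transitively, and the only
equivalence relations invariant under all automorphisms are equality and the
total relation. -/
def CPrim (c : V → V → C) : Prop :=
  CTrans c ∧ ∀ E : V → V → Prop, Equivalence E →
    (∀ σ : Equiv.Perm V, CAuto c σ → ∀ x y, E x y → E (σ x) (σ y)) →
    (∀ x y, E x y ↔ x = y) ∨ (∀ x y, E x y)

/-- The `i`-coloured neighbourhood `R_i(a)`. -/
def CNbhd (c : V → V → C) (i : C) (a : V) : Set V :=
  {x | x ≠ a ∧ c a x = i}

/-- `X` is a clique in colour `i`. -/
def CClique (c : V → V → C) (i : C) (X : Set V) : Prop :=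
  ∀ x ∈ X, ∀ y ∈ X, x ≠ y → c x y = i

/-- There is an `i`-coloured path with `k` edges from `x` to `y`
(a sequence of pairwise distinct vertices). -/
def CPath (c : V → V → C) (i : C) (x y : V) (k : ℕ) : Prop :=
  ∃ p : Fin (k + 1) → V, Function.Injective p ∧ p 0 = x ∧ p (Fin.last k) = y ∧
    ∀ j : Fin k, c (p j.castSucc) (p j.succ) = i

/-! Definitions specific to 3-graphs, with colours `R = 0`, `S = 1`, `T = 2`. -/

/-- `x = y` or the pair `{x, y}` has colour `R` (the reflexive closure of `R`). -/
def CErel (c : V → V → Fin 3) (x y : V) : Prop :=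
  x = y ∨ c x y = 0

/-- For `c a b = R`, the line `ℓ(a,b)`: the vertex `a` together with the
`R`-class of `b` inside `R(a)`. -/
def CLine (c : V → V → Fin 3) (a b : V) : Set V :=
  insert a {x | (x ≠ a ∧ c a x = 0) ∧ (x = b ∨ c x b = 0)}

/-- A 3-graph is semilinear if its automorphism group acts transitively,
`R(a)` is infinite for every `a`, and on every `R(a)` the reflexive closure of
`R` is an equivalence relation with finitely many classes. -/
def CSemilinear (c : V → V → Fin 3) : Prop :=
  CTrans c ∧ (∀ a : V, (CNbhd c 0 a).Infinite) ∧
    (∀ a : V, ∀ x ∈ CNbhd c 0 a, ∀ y ∈ CNbhd c 0 a, ∀ z ∈ CNbhd c 0 a,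
      (x = y ∨ c x y = 0) → (y = z ∨ c y z = 0) → (x = z ∨ c x z = 0)) ∧
    (∀ a : V, ∃ F : Finset V, (↑F : Set V) ⊆ CNbhd c 0 a ∧
      ∀ x ∈ CNbhd c 0 a, ∃ v ∈ F, x = v ∨ c x v = 0)

/-- Each point is incident with exactly `m` lines: every `R`-neighbourhood has
exactly `m` `R`-classes (witnessed by a transversal of size `m`). -/
def CNumLines (c : V → V → Fin 3) (m : ℕ) : Prop :=
  ∀ a : V, ∃ F : Finset V, F.card = m ∧ (↑F : Set V) ⊆ CNbhd c 0 a ∧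
    (∀ x ∈ F, ∀ y ∈ F, x ≠ y → c x y ≠ 0) ∧
    (∀ x ∈ CNbhd c 0 a, ∃ v ∈ F, x = v ∨ c x v = 0)

/-- `x` and `y` are at `R`-distance exactly 2. -/
def CRDist2 (c : V → V → Fin 3) (x y : V) : Prop :=
  x ≠ y ∧ c x y ≠ 0 ∧ ∃ z, z ≠ x ∧ z ≠ y ∧ c x z = 0 ∧ c z y = 0

/-- `x` and `y` are at `R`-distance exactly 3. -/
def CRDist3 (c : V → V → Fin 3) (x y : V) : Prop :=
  x ≠ y ∧ c x y ≠ 0 ∧ (¬ ∃ z, z ≠ x ∧ z ≠ y ∧ c x z = 0 ∧ c z y = 0) ∧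
    ∃ z w, z ≠ x ∧ z ≠ y ∧ w ≠ x ∧ w ≠ y ∧ z ≠ w ∧
      c x z = 0 ∧ c z w = 0 ∧ c w y = 0

/-- `M` has `R`-diameter 3: for distinct vertices, colour `S` holds exactly at
`R`-distance 2 and colour `T` exactly at `R`-distance 3. -/
def CDiamR3 (c : V → V → Fin 3) : Prop :=
  ∀ x y : V, x ≠ y →
    (c x y = 1 ↔ CRDist2 c x y) ∧ (c x y = 2 ↔ CRDist3 c x y)

section Aux

variable {V' : Type*} (c : V' → V' → Fin 3)

lemma aux_line_clique (hsymm : CSymm c)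
    (heqv : ∀ a : V', ∀ x ∈ CNbhd c 0 a, ∀ y ∈ CNbhd c 0 a, ∀ z ∈ CNbhd c 0 a,
      (x = y ∨ c x y = 0) → (y = z ∨ c y z = 0) → (x = z ∨ c x z = 0))
    {a b : V'} (hab : a ≠ b) (hcab : c a b = 0) :
    CClique c 0 (CLine c a b) := by
  intro x hx y hy hxy
  have hbR : b ∈ CNbhd c 0 a := ⟨hab.symm, hcab⟩
  rcases hx with rfl | ⟨⟨hxa, hax⟩, hxb⟩
  · rcases hy with rfl | ⟨⟨hya, hay⟩, hyb⟩
    · exact absurd rfl hxy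
    · exact hay
  · rcases hy with rfl | ⟨⟨hya, hay⟩, hyb⟩
    · rw [hsymm]; exact hax
    · have h1 : x ∈ CNbhd c 0 a := ⟨hxa, hax⟩
      have h2 : y ∈ CNbhd c 0 a := ⟨hya, hay⟩
      have hby : b = y ∨ c b y = 0 := by
        rcases hyb with rfl | h
        · exact Or.inl rfl
        · exact Or.inr (by rw [hsymm]; exact h)
      rcases heqv a x h1 b hbR y h2 hxb hby with rfl | h
      · exact absurd rfl hxy
      · exact h

lemma aux_line_max (hsymm : CSymm c) {a b : V'} :
    ∀ X : Set V', CClique c 0 X → a ∈ X → b ∈ X → X ⊆ CLine c a b := by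
  intro X hX haX hbX x hxX
  by_cases hxa : x = a
  · exact Or.inl hxa
  · refine Or.inr ⟨⟨hxa, ?_⟩, ?_⟩
    · rw [hsymm]; exact hX x hxX a haX hxa
    · by_cases hxb : x = b
      · exact Or.inl hxb
      · exact Or.inr (hX x hxX b hbX hxb)

end Aux

/-- in an infinite transitive 3-graph in which every `R(a)` is
infinite and carries the reflexive closure of `R` as an equivalence relation
with finitely many classes, the lines `ℓ(a,b)` are the unique maximal
`R`-cliques through their `R`-edges, any two distinct points lie on at most
one line, and (under homogeneity) every line is infinite; hence `(M, 𝓛)` is a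
semilinear space. -/
theorem stmt13 {V : Type*} [Infinite V] (c : V → V → Fin 3)
    (hsymm : CSymm c) (hall : CAll c) (htrans : CTrans c)
    (hinf : ∀ a : V, (CNbhd c 0 a).Infinite)
    (heqv : ∀ a : V, ∀ x ∈ CNbhd c 0 a, ∀ y ∈ CNbhd c 0 a, ∀ z ∈ CNbhd c 0 a,
      (x = y ∨ c x y = 0) → (y = z ∨ c y z = 0) → (x = z ∨ c x z = 0))
    (hfc : ∀ a : V, ∃ F : Finset V, (↑F : Set V) ⊆ CNbhd c 0 a ∧
      ∀ x ∈ CNbhd c 0 a, ∃ v ∈ F, x = v ∨ c x v = 0) :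
    ∀ a b : V, a ≠ b → c a b = 0 →
      (CClique c 0 (CLine c a b) ∧ a ∈ CLine c a b ∧ b ∈ CLine c a b ∧
        ∀ X : Set V, CClique c 0 X → a ∈ X → b ∈ X → X ⊆ CLine c a b) ∧
      (∀ a' b' : V, a' ≠ b' → c a' b' = 0 → ∀ x y : V, x ≠ y →
        x ∈ CLine c a b → y ∈ CLine c a b →
        x ∈ CLine c a' b' → y ∈ CLine c a' b' →
        CLine c a b = CLine c a' b') ∧
      (CHom c → (CLine c a b).Infinite) := by
  intro a b hab hcab
  classical
  have hcl := aux_line_clique c hsymm heqv hab hcab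
  have hmemb : b ∈ CLine c a b := Or.inr ⟨⟨hab.symm, hcab⟩, Or.inl rfl⟩
  refine ⟨⟨hcl, Or.inl rfl, hmemb, aux_line_max c hsymm⟩, ?_, ?_⟩
  · -- part (ii)
    intro a' b' hab' hcab' x y hxy hx1 hy1 hx2 hy2
    have hcl' := aux_line_clique c hsymm heqv hab' hcab'
    -- the union of the two lines is an R-clique
    have hcxy : c x y = 0 := hcl x hx1 y hy1 hxy
    have key : ∀ z ∈ CLine c a b, ∀ w ∈ CLine c a' b', z ≠ w → c z w = 0 := by
      intro z hz w hw hzw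
      by_cases hzx : z = x
      · subst hzx; exact hcl' z hx2 w hw hzw
      by_cases hzy : z = y
      · subst hzy; exact hcl' z hy2 w hw hzw
      by_cases hwx : w = x
      · subst hwx; exact hcl z hz w hx1 hzw
      by_cases hwy : w = y
      · subst hwy; exact hcl z hz w hy1 hzw
      have hzX : c z x = 0 := hcl z hz x hx1 hzx
      have hzY : c z y = 0 := hcl z hz y hy1 hzy
      have hwX : c w x = 0 := hcl' w hw x hx2 hwx
      have hwY : c w y = 0 := hcl' w hw y hy2 hwy
      have hz' : z ∈ CNbhd c 0 x := ⟨hzx, by rw [hsymm]; exact hzX⟩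
      have hy' : y ∈ CNbhd c 0 x := ⟨fun e => hxy e.symm, hcxy⟩
      have hw' : w ∈ CNbhd c 0 x := ⟨hwx, by rw [hsymm]; exact hwX⟩
      rcases heqv x z hz' y hy' w hw' (Or.inr hzY)
          (Or.inr (by rw [hsymm]; exact hwY)) with rfl | h
      · exact absurd rfl hzw
      · exact h
    have hZ : CClique c 0 (CLine c a b ∪ CLine c a' b') := by
      intro u hu v hv huv
      rcases hu with hu | hu <;> rcases hv with hv | hv
      · exact hcl u hu v hv huv
      · exact key u hu v hv huv
      · rw [hsymm]; exact key v hv u hu huv.symm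
      · exact hcl' u hu v hv huv
    have s1 : CLine c a b ∪ CLine c a' b' ⊆ CLine c a' b' :=
      aux_line_max c hsymm _ hZ
        (Or.inr (Or.inl rfl))
        (Or.inr (Or.inr ⟨⟨hab'.symm, hcab'⟩, Or.inl rfl⟩))
    have s2 : CLine c a b ∪ CLine c a' b' ⊆ CLine c a b :=
      aux_line_max c hsymm _ hZ
        (Or.inl (Or.inl rfl))
        (Or.inl (Or.inr ⟨⟨hab.symm, hcab⟩, Or.inl rfl⟩))
    exact Set.Subset.antisymm (fun u hu => s1 (Or.inl hu)) (fun u hu => s2 (Or.inr hu))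
  · -- part (iii)
    intro hhom
    obtain ⟨F, hFsub, hFcov⟩ := hfc a
    have hcls : ∃ v ∈ F, {x | x ∈ CNbhd c 0 a ∧ (x = v ∨ c x v = 0)}.Infinite := by
      by_contra h
      push_neg at h
      have hfin : (CNbhd c 0 a).Finite := by
        refine Set.Finite.subset
          (Set.Finite.biUnion F.finite_toSet
            (t := fun v => {x | x ∈ CNbhd c 0 a ∧ (x = v ∨ c x v = 0)})
            (fun v hv => h v hv)) ?_
        intro x hx
        obtain ⟨v, hvF, hv⟩ := hFcov x hx
        exact Set.mem_biUnion hvF ⟨hx, hv⟩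
      exact hinf a hfin
    obtain ⟨v, hvF, hvinf⟩ := hcls
    have hvR : v ∈ CNbhd c 0 a := hFsub hvF
    have hva : v ≠ a := hvR.1
    have hcav : c a v = 0 := hvR.2
    have hlv : (CLine c a v).Infinite :=
      hvinf.mono (fun x hx => Or.inr ⟨hx.1, hx.2⟩)
    -- homogeneity: an automorphism fixing a and sending b to v
    set f : V → V := fun x => if x = b then v else x with hf
    have hfa : f a = a := if_neg hab
    have hfb : f b = v := if_pos rfl
    obtain ⟨σ, hσauto, hσ⟩ := hhom {a, b} f
      (by
        intro x hx y hy h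
        simp only [Finset.coe_insert, Set.mem_insert_iff, Finset.coe_singleton,
          Set.mem_singleton_iff] at hx hy
        rcases hx with rfl | rfl <;> rcases hy with rfl | rfl
        · rfl
        · rw [hfa, hfb] at h; exact absurd h.symm hva
        · rw [hfa, hfb] at h; exact absurd h hva
        · rfl)
      (by
        intro x hx y hy hxy
        simp only [Finset.mem_insert, Finset.mem_singleton] at hx hy
        rcases hx with rfl | rfl <;> rcases hy with rfl | rfl
        · exact absurd rfl hxy
        · rw [hfa, hfb, hcav, hcab]
        · rw [hfa, hfb, hsymm, hcav, hsymm, hcab]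
        · exact absurd rfl hxy)
    have hσa : σ a = a := by
      rw [hσ a (by simp), hfa]
    have hσb : σ b = v := by
      rw [hσ b (by simp), hfb]
    -- ℓ(a,v) ⊆ σ '' ℓ(a,b)
    have hsub : CLine c a v ⊆ σ '' CLine c a b := by
      intro w hw
      refine ⟨σ.symm w, ?_, σ.apply_symm_apply w⟩
      rcases hw with hwA | ⟨⟨hwa, haw⟩, hwv⟩
      · exact Or.inl (by rw [hwA]; exact (Equiv.symm_apply_eq σ).mpr hσa.symm)
      · have hua : σ.symm w ≠ a := by
          intro h
          apply hwa
          rw [← σ.apply_symm_apply w, h, hσa]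
        refine Or.inr ⟨⟨hua, ?_⟩, ?_⟩
        · have h1 := hσauto a (σ.symm w) (fun e => hua e.symm)
          rw [hσa, σ.apply_symm_apply] at h1
          exact h1.symm.trans haw
        · by_cases hub : σ.symm w = b
          · exact Or.inl hub
          · have hwv' : c w v = 0 := by
              rcases hwv with rfl | h
              · exact absurd ((Equiv.symm_apply_eq σ).mpr hσb.symm) hub
              · exact h
            have h2 := hσauto (σ.symm w) b hub
            rw [σ.apply_symm_apply, hσb] at h2
            exact Or.inr (h2.symm.trans hwv')
    exact Set.Infinite.of_image σ ((hlv.mono hsub))
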